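/- Let (E,d) be a random metric space with base (Ω,𝓕,P) and G a σ-stable subset of E. Then the closure of G in the (ε,λ)-topology coincides with the closure of G in the L⁰-topology; in particular G is (ε,λ)-closed iff G is L⁰-closed. -/

import Mathlib

open MeasureTheory Filter Set

variable {Ω : Type*} [MeasurableSpace Ω]

/-- `(E,d)` is a random metric space with base `(Ω,𝓕,μ)`: `d x y` represents an element of
`L⁰₊(𝓕)` (nonnegative a.e.), equality/inequality of distances being understood a.e. -/
structure IsRandomMetric (μ : Measure Ω) {E : Type*} (d : E → E → Ω → ℝ) : Prop where
  meas : ∀ x y, Measurable (d x y)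
  nonneg : ∀ x y, ∀ᵐ ω ∂μ, 0 ≤ d x y ω
  eq_zero_iff : ∀ x y, (d x y =ᵐ[μ] 0) ↔ x = y
  symm : ∀ x y, d x y =ᵐ[μ] d y x
  triangle : ∀ x y z, ∀ᵐ ω ∂μ, d x z ω ≤ d x y ω + d y z ω

/-- Cauchy sequence for the `(ε,λ)`-uniformity with base
`U(ε,λ) = {(x,y) : μ (d(x,y) < ε) > 1 − λ}`. -/
def ELCauchy (μ : Measure Ω) {E : Type*} (d : E → E → Ω → ℝ) (s : ℕ → E) : Prop :=
  ∀ ε : ℝ, 0 < ε → ∀ l : ℝ, 0 < l → l < 1 →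
    ∃ N, ∀ m ≥ N, ∀ n ≥ N, μ {ω | d (s m) (s n) ω < ε} > ENNReal.ofReal (1 - l)

/-- Convergence for the `(ε,λ)`-uniformity (convergence in probability of distances). -/
def ELTendsto (μ : Measure Ω) {E : Type*} (d : E → E → Ω → ℝ) (s : ℕ → E) (x : E) : Prop :=
  ∀ ε : ℝ, 0 < ε → ∀ l : ℝ, 0 < l → l < 1 →
    ∃ N, ∀ n ≥ N, μ {ω | d (s n) x ω < ε} > ENNReal.ofReal (1 - l)

/-- `(ε,λ)`-completeness: the metrizable `(ε,λ)`-uniformity is complete. -/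
def ELComplete (μ : Measure Ω) {E : Type*} (d : E → E → Ω → ℝ) : Prop :=
  ∀ s : ℕ → E, ELCauchy μ d s → ∃ x, ELTendsto μ d s x

/-- A countable measurable partition of `Ω`. -/
def IsMeasPartition {Ω : Type*} [MeasurableSpace Ω] (A : ℕ → Set Ω) : Prop :=
  (∀ n, MeasurableSet (A n)) ∧ Pairwise (Function.onFun Disjoint A) ∧ (⋃ n, A n) = Set.univ

/-- `x` is the countable concatenation `Σₙ Ĩ_{Aₙ} xₙ` of `(xₙ)` along `(Aₙ)`:
`Ĩ_{Aₙ}·d(x,xₙ) = 0` for all `n`. -/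
def IsConcat {Ω : Type*} [MeasurableSpace Ω] (μ : MeasureTheory.Measure Ω) {E : Type*}
    (d : E → E → Ω → ℝ) (A : ℕ → Set Ω) (xs : ℕ → E) (x : E) : Prop :=
  ∀ n, ∀ᵐ ω ∂μ, ω ∈ A n → d x (xs n) ω = 0

/-- The random metric space `(E,d)` is σ-stable. -/
def SigmaStable {Ω : Type*} [MeasurableSpace Ω] (μ : MeasureTheory.Measure Ω) {E : Type*}
    (d : E → E → Ω → ℝ) : Prop :=
  ∀ A : ℕ → Set Ω, IsMeasPartition A → ∀ xs : ℕ → E, ∃ x, IsConcat μ d A xs x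

/-- A nonempty subset `G` is σ-stable: countable concatenations of elements of `G` exist in `G`. -/
def SigmaStableSet {Ω : Type*} [MeasurableSpace Ω] (μ : MeasureTheory.Measure Ω) {E : Type*}
    (d : E → E → Ω → ℝ) (G : Set E) : Prop :=
  ∀ A : ℕ → Set Ω, IsMeasPartition A → ∀ xs : ℕ → E, (∀ n, xs n ∈ G) →
    ∃ x ∈ G, IsConcat μ d A xs x

/-- The closure of `G` for the `(ε,λ)`-topology: `x` is in the closure iff every basic
`(ε,λ)`-neighbourhood of `x` meets `G`. -/
def ELClosure {Ω : Type*} [MeasurableSpace Ω] (μ : MeasureTheory.Measure Ω) {E : Type*}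
    (d : E → E → Ω → ℝ) (G : Set E) : Set E :=
  {x | ∀ ε : ℝ, 0 < ε → ∀ l : ℝ, 0 < l → l < 1 →
    ∃ g ∈ G, μ {ω | d x g ω < ε} > ENNReal.ofReal (1 - l)}

/-- The closure of `G` for the `L⁰`-topology: `x` is in the closure iff every basic
`L⁰`-neighbourhood of `x` meets `G`. -/
def L0Closure {Ω : Type*} [MeasurableSpace Ω] (μ : MeasureTheory.Measure Ω) {E : Type*}
    (d : E → E → Ω → ℝ) (G : Set E) : Set E :=
  {x | ∀ ε : Ω → ℝ, Measurable ε → (∀ᵐ ω ∂μ, 0 < ε ω) → ∃ g ∈ G, ∀ᵐ ω ∂μ, d x g ω < ε ω}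

/-- for a σ-stable subset `G` of a random metric space, the `(ε,λ)`-closure
and the `L⁰`-closure of `G` coincide; in particular `G` is `(ε,λ)`-closed iff it is
`L⁰`-closed. -/
theorem elClosure_eq_l0Closure {E : Type*}
    (μ : Measure Ω) [IsProbabilityMeasure μ]
    (d : E → E → Ω → ℝ) (hd : IsRandomMetric μ d)
    (G : Set E) (hG : SigmaStableSet μ d G) :
    ELClosure μ d G = L0Closure μ d G ∧
      (ELClosure μ d G = G ↔ L0Closure μ d G = G) := by
  have key : ELClosure μ d G = L0Closure μ d G := by
    apply Set.Subset.antisymm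
    · -- (ε,λ)-closure ⊆ L⁰-closure, using σ-stability
      intro x hx ε hεm hεpos
      have hchoice : ∀ n : ℕ, ∃ g ∈ G,
          μ {ω | d x g ω < ((n : ℝ) + 1)⁻¹} > ENNReal.ofReal (1 - ((n : ℝ) + 2)⁻¹) := by
        intro n
        refine hx _ (by positivity) _ (by positivity) ?_
        rw [inv_lt_one_iff₀]
        right
        have : (0 : ℝ) ≤ (n : ℝ) := Nat.cast_nonneg n
        linarith
      choose g hgG hgμ using hchoice
      set D : ℕ → Set Ω := fun n =>
        {ω | ((n : ℝ) + 1)⁻¹ < ε ω} ∩ {ω | d x (g n) ω < ((n : ℝ) + 1)⁻¹} with hDdef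
      have hDm : ∀ n, MeasurableSet (D n) := fun n =>
        (measurableSet_lt measurable_const hεm).inter
          (measurableSet_lt (hd.meas x (g n)) measurable_const)
      set A : ℕ → Set Ω := fun n =>
        Nat.casesOn n (⋃ m, D m)ᶜ (fun k => disjointed D k) with hAdef
      have hAm : ∀ n, MeasurableSet (A n) := by
        intro n
        cases n with
        | zero => exact (MeasurableSet.iUnion fun m => hDm m).compl
        | succ k => exact MeasurableSet.disjointed hDm k
      have hApart : IsMeasPartition A := by
        refine ⟨hAm, ?_, ?_⟩
        · intro m n hmn
          have hsub : ∀ k, disjointed D k ⊆ ⋃ j, D j := fun k =>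
            (disjointed_subset D k).trans (subset_iUnion D k)
          cases m with
          | zero =>
            cases n with
            | zero => exact absurd rfl hmn
            | succ k => exact disjoint_compl_left.mono_right (hsub k)
          | succ j =>
            cases n with
            | zero => exact (disjoint_compl_left.mono_right (hsub j)).symm
            | succ k =>
              exact disjoint_disjointed D (fun h => hmn (by rw [h]))
        · apply Set.eq_univ_iff_forall.2
          intro ω
          by_cases hω : ω ∈ ⋃ m, D m
          · rw [← iUnion_disjointed] at hω
            obtain ⟨k, hk⟩ := Set.mem_iUnion.1 hω
            exact Set.mem_iUnion.2 ⟨k + 1, hk⟩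
          · exact Set.mem_iUnion.2 ⟨0, hω⟩
      obtain ⟨y, hyG, hycon⟩ := hG A hApart (fun n => Nat.casesOn n (g 0) g)
        (fun n => Nat.casesOn n (hgG 0) hgG)
      refine ⟨y, hyG, ?_⟩
      -- first: μ (A 0) = 0
      have hcompl : ∀ n : ℕ, μ {ω | ¬ d x (g n) ω < ((n : ℝ) + 1)⁻¹} ≤
          ENNReal.ofReal ((n : ℝ) + 2)⁻¹ := by
        intro n
        have hms : MeasurableSet {ω | d x (g n) ω < ((n : ℝ) + 1)⁻¹} :=
          measurableSet_lt (hd.meas x (g n)) measurable_const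
        have hc : {ω | ¬ d x (g n) ω < ((n : ℝ) + 1)⁻¹}
            = {ω | d x (g n) ω < ((n : ℝ) + 1)⁻¹}ᶜ := rfl
        rw [hc, measure_compl hms (measure_ne_top μ _), measure_univ]
        have hle : (0 : ℝ) ≤ 1 - ((n : ℝ) + 2)⁻¹ := by
          have h1 : ((n : ℝ) + 2)⁻¹ ≤ 1 := by
            rw [inv_le_one_iff₀]; right
            have : (0 : ℝ) ≤ (n : ℝ) := Nat.cast_nonneg n
            linarith
          linarith
        have heq : (1 : ENNReal) - ENNReal.ofReal (1 - ((n : ℝ) + 2)⁻¹)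
            = ENNReal.ofReal ((n : ℝ) + 2)⁻¹ := by
          rw [← ENNReal.ofReal_one, ← ENNReal.ofReal_sub _ hle]
          ring_nf
        calc 1 - μ {ω | d x (g n) ω < ((n : ℝ) + 1)⁻¹}
            ≤ 1 - ENNReal.ofReal (1 - ((n : ℝ) + 2)⁻¹) :=
              tsub_le_tsub_left (le_of_lt (hgμ n)) 1
          _ = ENNReal.ofReal ((n : ℝ) + 2)⁻¹ := heq
      have hT : Tendsto (fun n : ℕ => μ {ω | ε ω ≤ ((n : ℝ) + 1)⁻¹}) atTop (nhds 0) := by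
        have hms : ∀ n : ℕ, NullMeasurableSet {ω | ε ω ≤ ((n : ℝ) + 1)⁻¹} μ := fun n =>
          (measurableSet_le hεm measurable_const).nullMeasurableSet
        have hanti : Antitone fun n : ℕ => {ω | ε ω ≤ ((n : ℝ) + 1)⁻¹} := by
          intro m n hmn ω hω
          have : ((n : ℝ) + 1)⁻¹ ≤ ((m : ℝ) + 1)⁻¹ := by
            apply inv_anti₀ (by positivity)
            have : (m : ℝ) ≤ (n : ℝ) := Nat.cast_le.2 hmn
            linarith
          exact le_trans hω this
        have hiInter : μ (⋂ n : ℕ, {ω | ε ω ≤ ((n : ℝ) + 1)⁻¹}) = 0 := by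
          refine measure_mono_null ?_ (ae_iff.1 hεpos)
          · intro ω hω
            simp only [Set.mem_iInter, Set.mem_setOf_eq] at hω ⊢
            intro hpos
            obtain ⟨n, hn⟩ := exists_nat_gt (ε ω)⁻¹
            have hn' : ((n : ℝ) + 1)⁻¹ < ε ω := by
              rw [inv_lt_comm₀ (by positivity) hpos]
              linarith
            exact absurd (hω n) (not_le.2 hn')
        have := tendsto_measure_iInter_atTop hms hanti ⟨0, measure_ne_top μ _⟩
        rw [hiInter] at this
        exact this
      have hT2 : Tendsto (fun n : ℕ => ENNReal.ofReal ((n : ℝ) + 2)⁻¹) atTop (nhds 0) := by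
        rw [show (0 : ENNReal) = ENNReal.ofReal 0 by simp]
        apply ENNReal.tendsto_ofReal
        exact tendsto_inv_atTop_zero.comp
          (tendsto_atTop_add_const_right _ 2 tendsto_natCast_atTop_atTop)
      have hA0 : μ (A 0) = 0 := by
        have hbound : ∀ n : ℕ, μ (A 0) ≤
            μ {ω | ε ω ≤ ((n : ℝ) + 1)⁻¹} + ENNReal.ofReal ((n : ℝ) + 2)⁻¹ := by
          intro n
          have hsub : A 0 ⊆ {ω | ε ω ≤ ((n : ℝ) + 1)⁻¹}
              ∪ {ω | ¬ d x (g n) ω < ((n : ℝ) + 1)⁻¹} := by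
            intro ω hω
            have hωn : ω ∉ D n := fun h => hω (Set.mem_iUnion.2 ⟨n, h⟩)
            by_cases h1 : ((n : ℝ) + 1)⁻¹ < ε ω
            · right
              intro h2
              exact hωn ⟨h1, h2⟩
            · left
              exact not_lt.1 h1
          calc μ (A 0) ≤ μ ({ω | ε ω ≤ ((n : ℝ) + 1)⁻¹}
                ∪ {ω | ¬ d x (g n) ω < ((n : ℝ) + 1)⁻¹}) := measure_mono hsub
            _ ≤ μ {ω | ε ω ≤ ((n : ℝ) + 1)⁻¹}
                + μ {ω | ¬ d x (g n) ω < ((n : ℝ) + 1)⁻¹} := measure_union_le _ _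
            _ ≤ μ {ω | ε ω ≤ ((n : ℝ) + 1)⁻¹} + ENNReal.ofReal ((n : ℝ) + 2)⁻¹ := by
                gcongr
                exact hcompl n
        have hsum : Tendsto (fun n : ℕ => μ {ω | ε ω ≤ ((n : ℝ) + 1)⁻¹}
            + ENNReal.ofReal ((n : ℝ) + 2)⁻¹) atTop (nhds 0) := by
          simpa using Tendsto.add hT hT2
        exact le_antisymm (ge_of_tendsto' hsum hbound) zero_le
      -- now combine a.e. statements
      have hcon : ∀ᵐ ω ∂μ, ∀ n, ω ∈ A n → d y ((fun n => Nat.casesOn n (g 0) g) n) ω = 0 :=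
        (ae_all_iff).2 hycon
      have htri : ∀ᵐ ω ∂μ, ∀ k, d x y ω ≤ d x (g k) ω + d (g k) y ω :=
        (ae_all_iff).2 fun k => hd.triangle x (g k) y
      have hsymm : ∀ᵐ ω ∂μ, ∀ k, d (g k) y ω = d y (g k) ω :=
        (ae_all_iff).2 fun k => hd.symm (g k) y
      have hA0ae : ∀ᵐ ω ∂μ, ω ∉ A 0 := by
        rw [ae_iff]
        simpa using hA0
      filter_upwards [hcon, htri, hsymm, hA0ae] with ω h1 h2 h3 h4
      have hmem : ω ∈ ⋃ n, A n := by
        rw [hApart.2.2]; trivial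
      obtain ⟨n, hn⟩ := Set.mem_iUnion.1 hmem
      cases n with
      | zero => exact absurd hn h4
      | succ k =>
        have hDk : ω ∈ D k := disjointed_subset D k hn
        have hεk : ((k : ℝ) + 1)⁻¹ < ε ω := hDk.1
        have hdk : d x (g k) ω < ((k : ℝ) + 1)⁻¹ := hDk.2
        have hz : d y (g k) ω = 0 := h1 (k + 1) hn
        have := h2 k
        rw [h3 k, hz] at this
        linarith
    · -- L⁰-closure ⊆ (ε,λ)-closure
      intro x hx ε hε l hl hl1
      obtain ⟨g, hgG, hae⟩ := hx (fun _ => ε) measurable_const (ae_of_all _ fun _ => hε)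
      refine ⟨g, hgG, ?_⟩
      have hms : MeasurableSet {ω | d x g ω < ε} :=
        measurableSet_lt (hd.meas x g) measurable_const
      have h0 : μ {ω | d x g ω < ε}ᶜ = 0 := by
        rw [ae_iff] at hae
        exact hae
      have h1 : μ {ω | d x g ω < ε} = 1 := (prob_compl_eq_zero_iff hms).1 h0
      rw [h1]
      exact ENNReal.ofReal_lt_one.2 (by linarith)
  exact ⟨key, by rw [key]⟩
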